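/- arXiv:1502.06132 — 5 statements merged into one kernel-verified Lean document; each statement's English description precedes it below -/
import Mathlib

section
/- Let S be a finite set with a fixpoint-free involution *, and let w : S × S → ℝ be a symmetric weight function satisfying, for all a, b, c with b ∉ {a, a*} and c ∉ {a, a*}: (i) consistency: w(a,b) + w(a,b*) = w(a,c) + w(a,c*); (ii) the cocycle identity: w(a*,b) + w(b*,c) + w(c*,a) = w(a,b*) + w(b,c*) + w(c,a*) whenever a, b, c are pairwise non-equal and pairwise non-involutive. Define σ(a,b) := w(a*,b) − w(a,b*). Then any directed graph Γ on vertex set S in which every directed edge (a,b) satisfies σ(a,b) > 0 contains no directed cycles. -/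
/-- Acyclicity Lemma: given a symmetric weight function on a finite set with
fixpoint-free involution, satisfying the consistency and cocycle constraints
(together with the canonical extension to non-proper pairs), any directed graph
whose every edge `(a,b)` has positive orientation cocycle
`σ(a,b) = w(a*,b) − w(a,b*)` contains no directed cycles. -/
theorem acyclicity_lemma {S : Type*} [Fintype S]
    (s : S → S)
    (hinv : ∀ a : S, s (s a) = a)
    (hnf : ∀ a : S, s a ≠ a)
    (w : S → S → ℝ)
    (hsym : ∀ a b : S, w a b = w b a)
    (hcons : ∀ a b c : S, b ≠ a → b ≠ s a → c ≠ a → c ≠ s a →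
      w a b + w a (s b) = w a c + w a (s c))
    (hcoc : ∀ a b c : S, b ≠ a → b ≠ s a → c ≠ a → c ≠ s a → c ≠ b → c ≠ s b →
      w (s a) b + w (s b) c + w (s c) a = w a (s b) + w b (s c) + w c (s a))
    (hdiag : ∀ a b : S, b ≠ a → b ≠ s a → w a a = w a b + w a (s b))
    (hstar : ∀ a : S, w a (s a) = 0)
    (Γ : S → S → Prop)
    (hΓ : ∀ a b : S, Γ a b → 0 < w (s a) b - w a (s b)) :
    ¬ ∃ (m : ℕ) (f : ℕ → S), 1 ≤ m ∧ f m = f 0 ∧ ∀ i < m, Γ (f i) (f (i + 1)) := by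
  -- Key: σ(a,b) = w b b - w a a for all a b.
  have key : ∀ a b : S, w (s a) b - w a (s b) = w b b - w a a := by
    intro a b
    by_cases hba : b = a
    · subst hba; rw [hsym (s b) b]; ring
    by_cases hbsa : b = s a
    · subst hbsa; rw [hinv a]
    · have h1 := hdiag a b hba hbsa
      have hab : a ≠ b := fun h => hba h.symm
      have hasb : a ≠ s b := fun h => hbsa (by rw [h, hinv])
      have h2 := hdiag b a hab hasb
      rw [h1, h2, hsym b (s a), hsym b a, hsym (s a) b]
      ring
  rintro ⟨m, f, hm, hf, hedge⟩
  have hpos : ∀ i ∈ Finset.range m, 0 < w (f (i+1)) (f (i+1)) - w (f i) (f i) := by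
    intro i hi
    rw [← key (f i) (f (i+1))]
    exact hΓ _ _ (hedge i (Finset.mem_range.mp hi))
  have hsum : ∑ i ∈ Finset.range m, (w (f (i+1)) (f (i+1)) - w (f i) (f i)) =
      w (f m) (f m) - w (f 0) (f 0) := Finset.sum_range_sub (fun i => w (f i) (f i)) m
  rw [hf] at hsum
  have hne : (Finset.range m).Nonempty := ⟨0, Finset.mem_range.mpr hm⟩
  have := Finset.sum_pos hpos hne
  rw [hsum] at this
  simp at this
end

section
/- Let S be a finite set with fixpoint-free involution * and let w be a symmetric weight function as in the acyclicity setting (satisfying consistency and the cocycle identity). Then the extended orientation cocycle σ(a,b) := w(a*,b) − w(a,b*) is additive: σ(a,b) + σ(b,c) = σ(a,c) for all a, b, c ∈ S. -/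
/-- The extended orientation cocycle `σ(a,b) = w(a*,b) − w(a,b*)` is additive:
`σ(a,b) + σ(b,c) = σ(a,c)` for all `a, b, c`. -/
theorem orientation_cocycle_additive {S : Type*} [Fintype S]
    (s : S → S)
    (hinv : ∀ a : S, s (s a) = a)
    (hnf : ∀ a : S, s a ≠ a)
    (w : S → S → ℝ)
    (hsym : ∀ a b : S, w a b = w b a)
    (hcons : ∀ a b c : S, b ≠ a → b ≠ s a → c ≠ a → c ≠ s a →
      w a b + w a (s b) = w a c + w a (s c))
    (hcoc : ∀ a b c : S, b ≠ a → b ≠ s a → c ≠ a → c ≠ s a → c ≠ b → c ≠ s b →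
      w (s a) b + w (s b) c + w (s c) a = w a (s b) + w b (s c) + w c (s a))
    (hdiag : ∀ a b : S, b ≠ a → b ≠ s a → w a a = w a b + w a (s b))
    (hstar : ∀ a : S, w a (s a) = 0) :
    ∀ a b c : S,
      (w (s a) b - w a (s b)) + (w (s b) c - w b (s c)) = w (s a) c - w a (s c) := by
  intro a b c
  by_cases hba : b = a
  · subst hba
    rw [hsym (s b) b, hstar]
    ring
  by_cases hcb : c = b
  · subst hcb
    rw [hsym (s c) c, hstar]
    ring
  by_cases hca : c = a
  · subst hca
    rw [hsym (s c) c, hstar]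
    linarith [hsym (s c) b, hsym (s b) c]
  by_cases hbsa : b = s a
  · subst hbsa
    rw [hinv a]
    have h1 := hdiag a c hca hcb
    have h2 := hdiag (s a) c hcb (by rw [hinv]; exact hca)
    linarith
  by_cases hcsb : c = s b
  · subst hcsb
    rw [hinv b]
    have h1 := hdiag (s b) a (fun h => hca h.symm) (by rw [hinv]; exact fun h => hba h.symm)
    have h2 := hdiag b a (fun h => hba h.symm) (fun h => hca h.symm)
    linarith [hsym (s b) a, hsym (s b) (s a), hsym b a, hsym b (s a)]
  by_cases hcsa : c = s a
  · subst hcsa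
    rw [hinv a]
    have h1 := hdiag a b hba hbsa
    have h2 := hdiag (s a) b hbsa (by rw [hinv]; exact hba)
    linarith [hsym (s a) (s b), hsym b a]
  · have h := hcoc a b c hba hbsa hca hcsa hcb hcsb
    linarith [hsym c (s a), hsym (s c) a]
end

section
/- Let P be a finite weak poc set with dual vertex set P°, and let T ⊆ P be coherent. Then for every u ∈ P°, the set proj_K(u) := (u \ down(T*)) ∪ up(T) is a coherent complete *-selection, it contains T (i.e., lies in K := {v ∈ P° : T ⊆ v}), and it equals (u ∪ up(T)) \ down(T*). -/
def up {P : Type*} [PartialOrder P] (A : Set P) : Set P := {p | ∃ a ∈ A, a ≤ p}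

def down {P : Type*} [PartialOrder P] (A : Set P) : Set P := {q | ∃ a ∈ A, q ≤ a}

def Coherent {P : Type*} [PartialOrder P] (s : P → P) (S : Set P) : Prop :=
  ∀ b ∈ S, ∀ c ∈ S, ¬ b ≤ s c

def coh {P : Type*} [PartialOrder P] (s : P → P) (A : Set P) : Set P :=
  up A \ down (s '' A)

/-- A complete *-selection: contains exactly one of each pair `{a, a*}`. -/
def CompleteSel {P : Type*} (s : P → P) (A : Set P) : Prop :=
  ∀ a : P, a ∈ A ↔ s a ∉ A

/-- The vertex set of the dual cubing: coherent complete *-selections. -/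
def PocDual {P : Type*} [PartialOrder P] (s : P → P) : Set (Set P) :=
  {u | CompleteSel s u ∧ Coherent s u}

/-- Projection of a point to the convex set of vertices containing a coherent T:
the set (u \ down(T*)) ∪ up(T) is a dual vertex containing T and it equals
(u ∪ up(T)) \ down(T*). -/
theorem projection_of_point {P : Type*} [PartialOrder P] [Fintype P] [OrderBot P]
    (s : P → P)
    (hinv : ∀ a : P, s (s a) = a)
    (hnf : ∀ a : P, s a ≠ a)
    (hrev : ∀ a b : P, a ≤ b → s b ≤ s a)
    (T : Set P) (hT : Coherent s T)
    (u : Set P) (hu : u ∈ PocDual s) :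
    ((u \ down (s '' T)) ∪ up T) ∈ PocDual s ∧
    T ⊆ (u \ down (s '' T)) ∪ up T ∧
    (u \ down (s '' T)) ∪ up T = (u ∪ up T) \ down (s '' T) := by
  obtain ⟨husel, hucoh⟩ := hu
  -- D membership ↔ s a ∈ up T
  have hDU : ∀ a : P, a ∈ down (s '' T) ↔ s a ∈ up T := by
    intro a
    constructor
    · rintro ⟨_, ⟨t, ht, rfl⟩, hle⟩
      exact ⟨t, ht, by simpa [hinv] using hrev _ _ hle⟩
    · rintro ⟨t, ht, hle⟩
      exact ⟨s t, ⟨t, ht, rfl⟩, by simpa [hinv] using hrev _ _ hle⟩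
  -- up T and down (s '' T) are disjoint
  have hUU : ∀ a : P, ¬ (a ∈ up T ∧ s a ∈ up T) := by
    rintro a ⟨⟨t1, ht1, h1⟩, ⟨t2, ht2, h2⟩⟩
    have : a ≤ s t2 := by simpa [hinv] using hrev _ _ h2
    exact hT t1 ht1 t2 ht2 (h1.trans this)
  have hdisj : ∀ a : P, ¬ (a ∈ up T ∧ a ∈ down (s '' T)) := by
    rintro a ⟨h1, h2⟩
    exact hUU a ⟨h1, (hDU a).1 h2⟩
  refine ⟨⟨?_, ?_⟩, ?_, ?_⟩
  · -- complete selection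
    intro a
    have h1 := husel a
    have h2 := hDU a
    have h3 := hDU (s a)
    rw [hinv] at h3
    have h4 := hUU a
    simp only [Set.mem_union, Set.mem_diff, h2, h3] at *
    tauto
  · -- coherent
    rintro b hb c hc hle
    rcases hb with ⟨hbu, hbD⟩ | hbU
    · rcases hc with ⟨hcu, hcD⟩ | hcU
      · exact hucoh b hbu c hcu hle
      · obtain ⟨t, ht, htc⟩ := hcU
        have : b ≤ s t := hle.trans (hrev _ _ htc)
        exact hbD ⟨s t, ⟨t, ht, rfl⟩, this⟩
    · rcases hc with ⟨hcu, hcD⟩ | hcU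
      · obtain ⟨t, ht, htb⟩ := hbU
        have : c ≤ s t := by
          have := hrev _ _ (htb.trans hle)
          simpa [hinv] using this
        exact hcD ⟨s t, ⟨t, ht, rfl⟩, this⟩
      · obtain ⟨t1, ht1, h1⟩ := hbU
        obtain ⟨t2, ht2, h2⟩ := hcU
        exact hT t1 ht1 t2 ht2 (h1.trans (hle.trans (hrev _ _ h2)))
  · -- T ⊆
    intro t ht
    exact Or.inr ⟨t, ht, le_refl t⟩
  · -- equality
    ext a
    have := hdisj a
    simp only [Set.mem_union, Set.mem_diff]
    tauto
end

section
/- Let P be a finite weak poc set with dual graph Γ (vertices P°, edges joining u, v with |u \ v| = 1), and let T ⊆ P be coherent with K := {v ∈ P° : T ⊆ v} nonempty. Then for every u ∈ P°, the vertex p(u) := (u \ down(T*)) ∪ up(T) is the unique vertex of K at minimal distance Δ(u, K), and Δ(u, p(u)) = |u ∩ down(T*)|. -/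
/-- The vertex p(u) = (u \ down(T*)) ∪ up(T) is the unique vertex of
K = {v ∈ P° : T ⊆ v} at minimal distance from u, and this distance equals
|u ∩ down(T*)|. -/
theorem closest_point_projection {P : Type*} [PartialOrder P] [Fintype P] [OrderBot P]
    (s : P → P)
    (hinv : ∀ a : P, s (s a) = a)
    (hnf : ∀ a : P, s a ≠ a)
    (hrev : ∀ a b : P, a ≤ b → s b ≤ s a)
    (T : Set P) (hT : Coherent s T)
    (hK : {v ∈ PocDual s | T ⊆ v}.Nonempty)
    (u : Set P) (hu : u ∈ PocDual s) :
    (u \ down (s '' T)) ∪ up T ∈ {v ∈ PocDual s | T ⊆ v} ∧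
    (u \ ((u \ down (s '' T)) ∪ up T)).ncard = (u ∩ down (s '' T)).ncard ∧
    (∀ v ∈ {v ∈ PocDual s | T ⊆ v},
      (u \ ((u \ down (s '' T)) ∪ up T)).ncard ≤ (u \ v).ncard ∧
      ((u \ v).ncard ≤ (u \ ((u \ down (s '' T)) ∪ up T)).ncard →
        v = (u \ down (s '' T)) ∪ up T)) := by
  classical
  obtain ⟨husel, hucoh⟩ := hu
  set D := down (s '' T) with hDdef
  set U := up T with hUdef
  have hdisj : ∀ a : P, a ∈ U → a ∈ D → False := by
    rintro a ⟨t, ht, hta⟩ ⟨-, ⟨b, hb, rfl⟩, hab⟩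
    exact hT t ht b hb (hta.trans hab)
  have hDiff : ∀ a : P, a ∈ D ↔ s a ∈ U := by
    intro a
    constructor
    · rintro ⟨-, ⟨b, hb, rfl⟩, hab⟩
      exact ⟨b, hb, by simpa [hinv] using hrev a (s b) hab⟩
    · rintro ⟨t, ht, hta⟩
      exact ⟨s t, ⟨t, ht, rfl⟩, by simpa [hinv] using hrev t (s a) hta⟩
  have hUin : ∀ v, v ∈ PocDual s → T ⊆ v → U ⊆ v := by
    rintro v ⟨hvsel, hvcoh⟩ hTv a ⟨t, ht, hta⟩
    by_contra hav
    have hsav : s a ∈ v := by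
      by_contra h; exact hav ((hvsel a).mpr h)
    exact hvcoh t (hTv ht) (s a) hsav (by simpa [hinv] using hta)
  have hDout : ∀ v, v ∈ PocDual s → T ⊆ v → ∀ a ∈ D, a ∉ v := by
    rintro v ⟨hvsel, hvcoh⟩ hTv a ⟨-, ⟨b, hb, rfl⟩, hab⟩ hav
    exact hvcoh a hav b (hTv hb) hab
  have hpsel : CompleteSel s ((u \ D) ∪ U) := by
    intro a
    constructor
    · rintro (⟨hau, haD⟩ | haU) hsp
      · rcases hsp with ⟨hsu, hsD⟩ | hsU
        · exact (husel a).mp hau hsu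
        · exact haD ((hDiff a).mpr hsU)
      · rcases hsp with ⟨hsu, hsD⟩ | hsU
        · exact hsD ((hDiff (s a)).mpr (by rwa [hinv]))
        · exact hdisj _ hsU ((hDiff (s a)).mpr (by rwa [hinv]))
    · intro hsp
      by_cases haU : a ∈ U
      · exact Or.inr haU
      by_cases haD : a ∈ D
      · exact absurd (Or.inr ((hDiff a).mp haD)) hsp
      left
      refine ⟨?_, haD⟩
      by_contra hau
      have hsu : s a ∈ u := by by_contra h; exact hau ((husel a).mpr h)
      exact hsp (Or.inl ⟨hsu, fun h => haU (by simpa [hinv] using (hDiff (s a)).mp h)⟩)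
  have hpcoh : Coherent s ((u \ D) ∪ U) := by
    rintro b hb c hc hbc
    rcases hb with ⟨hbu, hbD⟩ | hbU
    · rcases hc with ⟨hcu, hcD⟩ | hcU
      · exact hucoh b hbu c hcu hbc
      · obtain ⟨t, ht, htc⟩ := hcU
        exact hbD ⟨s t, ⟨t, ht, rfl⟩, hbc.trans (hrev t c htc)⟩
    · obtain ⟨t, ht, htb⟩ := hbU
      have hcD : c ∈ D :=
        ⟨s t, ⟨t, ht, rfl⟩, by simpa [hinv] using hrev t (s c) (htb.trans hbc)⟩
      rcases hc with ⟨-, hcD'⟩ | hcU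
      · exact hcD' hcD
      · exact hdisj c hcU hcD
  have hpmem : (u \ D) ∪ U ∈ {v ∈ PocDual s | T ⊆ v} :=
    ⟨⟨hpsel, hpcoh⟩, fun t ht => Or.inr ⟨t, ht, le_refl t⟩⟩
  have hdiffeq : u \ ((u \ D) ∪ U) = u ∩ D := by
    ext a
    constructor
    · rintro ⟨hau, hp⟩
      refine ⟨hau, ?_⟩
      by_contra haD
      exact hp (Or.inl ⟨hau, haD⟩)
    · rintro ⟨hau, haD⟩
      exact ⟨hau, fun h => h.elim (fun h' => h'.2 haD) (fun h' => hdisj a h' haD)⟩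
  have hsub : ∀ v ∈ {v ∈ PocDual s | T ⊆ v}, u ∩ D ⊆ u \ v := by
    rintro v ⟨hv, hTv⟩ a ⟨hau, haD⟩
    exact ⟨hau, hDout v hv hTv a haD⟩
  refine ⟨hpmem, by rw [hdiffeq], ?_⟩
  rintro v hvK
  obtain ⟨hv, hTv⟩ := hvK
  have hle : (u \ ((u \ D) ∪ U)).ncard ≤ (u \ v).ncard := by
    rw [hdiffeq]
    exact Set.ncard_le_ncard (hsub v ⟨hv, hTv⟩) (Set.toFinite _)
  refine ⟨hle, ?_⟩
  intro hge
  rw [hdiffeq] at hge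
  have heq : u \ v = u ∩ D :=
    (Set.eq_of_subset_of_ncard_le (hsub v ⟨hv, hTv⟩) hge (Set.toFinite _)).symm
  have key : ∀ b : P, b ∈ u → b ∉ D → b ∈ v := by
    intro b hbu hbD
    by_contra hbv
    have hmem : b ∈ u \ v := ⟨hbu, hbv⟩
    rw [heq] at hmem
    exact hbD hmem.2
  ext a
  by_cases haU : a ∈ U
  · exact ⟨fun _ => Or.inr haU, fun _ => hUin v hv hTv haU⟩
  by_cases haD : a ∈ D
  · constructor
    · intro hav; exact absurd hav (hDout v hv hTv a haD)
    · rintro (⟨-, h⟩ | h)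
      · exact absurd haD h
      · exact absurd h haU
  by_cases hau : a ∈ u
  · exact ⟨fun _ => Or.inl ⟨hau, haD⟩, fun _ => key a hau haD⟩
  · have hsau : s a ∈ u := by by_contra h; exact hau ((husel a).mpr h)
    have hsaD : s a ∉ D := fun h => haU (by simpa [hinv] using (hDiff (s a)).mp h)
    have hsav : s a ∈ v := key _ hsau hsaD
    constructor
    · intro hav; exact absurd hsav ((hv.1 a).mp hav)
    · rintro (⟨h, -⟩ | h)
      · exact absurd h hau
      · exact absurd h haU
end

section
/- Let P and Q be finite weak poc sets and let P ∨ Q be their direct sum. Then the dual cubical complex of P ∨ Q is isomorphic to the Cartesian product of the duals: at the level of vertex sets, the map sending a coherent complete *-selection A on P ∨ Q to the pair (A ∩ P, A ∩ Q) is a bijection from (P ∨ Q)° onto P° × Q°, and it preserves medians. -/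
/-- A relative complete *-selection on a *-closed subset Q of P. -/
def RelSel {P : Type*} [PartialOrder P] (s : P → P) (Q : Set P) : Set (Set P) :=
  {u | u ⊆ Q ∧ (∀ a ∈ Q, (a ∈ u ↔ s a ∉ u)) ∧ Coherent s u}

/-- Direct sum: if the weak poc set R decomposes as R = P ∨ Q (the two poc
subsets P, Q are *-closed, cover R, meet exactly in {⊥, ⊥*}, and carry no order
relations between their proper parts), then A ↦ (A ∩ P, A ∩ Q) is a bijection
from the dual of R onto the product of the duals of P and Q, preserving medians
(which are computed coordinatewise on the product). -/
theorem direct_sum_dual {R : Type*} [PartialOrder R] [Fintype R] [OrderBot R]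
    (s : R → R)
    (hinv : ∀ a : R, s (s a) = a)
    (hnf : ∀ a : R, s a ≠ a)
    (hrev : ∀ a b : R, a ≤ b → s b ≤ s a)
    (P Q : Set R)
    (hPs : ∀ a ∈ P, s a ∈ P) (hQs : ∀ a ∈ Q, s a ∈ Q)
    (hPbot : (⊥ : R) ∈ P) (hQbot : (⊥ : R) ∈ Q)
    (hcover : P ∪ Q = Set.univ)
    (hmeet : P ∩ Q = {⊥, s ⊥})
    (hnorel : ∀ a ∈ P, ∀ b ∈ Q, a ∉ Q → b ∉ P → ¬ a ≤ b ∧ ¬ b ≤ a) :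
    Set.BijOn (fun A : Set R => (A ∩ P, A ∩ Q)) (PocDual s)
      (RelSel s P ×ˢ RelSel s Q) ∧
    (∀ u ∈ PocDual s, ∀ v ∈ PocDual s, ∀ w ∈ PocDual s,
      (fun A : Set R => (A ∩ P, A ∩ Q)) ((u ∩ v) ∪ (u ∩ w) ∪ (v ∩ w)) =
        (((u ∩ P) ∩ (v ∩ P)) ∪ ((u ∩ P) ∩ (w ∩ P)) ∪ ((v ∩ P) ∩ (w ∩ P)),
         ((u ∩ Q) ∩ (v ∩ Q)) ∪ ((u ∩ Q) ∩ (w ∩ Q)) ∪ ((v ∩ Q) ∩ (w ∩ Q)))) := by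
  -- coherence forbids ⊥
  have hbotnot : ∀ u : Set R, Coherent s u → (⊥ : R) ∉ u := fun u hu hb =>
    hu ⊥ hb ⊥ hb bot_le
  -- membership of both P and Q forces ⊥ or s ⊥
  have hPQ : ∀ a : R, a ∈ P → a ∈ Q → a = ⊥ ∨ a = s ⊥ := by
    intro a haP haQ
    have : a ∈ P ∩ Q := ⟨haP, haQ⟩
    rw [hmeet] at this
    exact this
  -- a ∈ P, a ∉ Q → s a ∉ Q
  have hsPQ : ∀ a : R, a ∈ P → a ∉ Q → s a ∉ Q := by
    intro a haP haQ hsaQ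
    have hsaP : s a ∈ P := hPs a haP
    rcases hPQ (s a) hsaP hsaQ with h | h
    · have : a = s ⊥ := by rw [← hinv a, h]
      exact haQ (this ▸ hQs ⊥ hQbot)
    · have : a = ⊥ := by
        have := congrArg s h; rwa [hinv, hinv] at this
      exact haQ (this ▸ hQbot)
  have hsQP : ∀ a : R, a ∈ Q → a ∉ P → s a ∉ P := by
    intro a haQ haP hsaP
    have hsaQ : s a ∈ Q := hQs a haQ
    rcases hPQ (s a) hsaP hsaQ with h | h
    · have : a = s ⊥ := by rw [← hinv a, h]
      exact haP (this ▸ hPs ⊥ hPbot)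
    · have : a = ⊥ := by
        have := congrArg s h; rwa [hinv, hinv] at this
      exact haP (this ▸ hPbot)
  -- every relative selection on a set containing ⊥ contains s ⊥
  have hsbot : ∀ (S : Set R), (⊥ : R) ∈ S → ∀ u ∈ RelSel s S, s ⊥ ∈ u := by
    rintro S hS u ⟨huS, huc, hucoh⟩
    by_contra h
    exact hbotnot u hucoh ((huc ⊥ hS).mpr h)
  constructor
  · refine ⟨?_, ?_, ?_⟩
    · -- MapsTo
      rintro A ⟨hc, hco⟩
      refine Set.mk_mem_prod ⟨Set.inter_subset_right, ?_, ?_⟩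
        ⟨Set.inter_subset_right, ?_, ?_⟩
      · intro a ha
        have hsP := hPs a ha
        simp only [Set.mem_inter_iff, ha, hsP, and_true]
        exact hc a
      · exact fun b hb c hc' => hco b hb.1 c hc'.1
      · intro a ha
        have hsQ := hQs a ha
        simp only [Set.mem_inter_iff, ha, hsQ, and_true]
        exact hc a
      · exact fun b hb c hc' => hco b hb.1 c hc'.1
    · -- InjOn
      intro A hA B hB h
      have h1 : A ∩ P = B ∩ P := congrArg Prod.fst h
      have h2 : A ∩ Q = B ∩ Q := congrArg Prod.snd h
      have hA' : A = (A ∩ P) ∪ (A ∩ Q) := by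
        rw [← Set.inter_union_distrib_left, hcover, Set.inter_univ]
      have hB' : B = (B ∩ P) ∪ (B ∩ Q) := by
        rw [← Set.inter_union_distrib_left, hcover, Set.inter_univ]
      rw [hA', hB', h1, h2]
    · -- SurjOn
      rintro ⟨u, v⟩ ⟨hu, hv⟩
      obtain ⟨huP, huc, hucoh⟩ := hu
      obtain ⟨hvQ, hvc, hvcoh⟩ := hv
      have hbu : (⊥ : R) ∉ u := hbotnot u hucoh
      have hbv : (⊥ : R) ∉ v := hbotnot v hvcoh
      have hsu : s ⊥ ∈ u := hsbot P hPbot u ⟨huP, huc, hucoh⟩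
      have hsv : s ⊥ ∈ v := hsbot Q hQbot v ⟨hvQ, hvc, hvcoh⟩
      refine ⟨u ∪ v, ⟨?_, ?_⟩, ?_⟩
      · -- CompleteSel on u ∪ v
        intro a
        by_cases haP : a ∈ P
        · by_cases haQ : a ∈ Q
          · rcases hPQ a haP haQ with rfl | rfl
            · simp only [Set.mem_union]
              constructor
              · rintro (h | h); exacts [absurd h hbu, absurd h hbv]
              · intro h; exact absurd (Or.inl hsu) h
            · simp only [Set.mem_union, hinv]
              constructor
              · rintro _ (h | h); exacts [hbu h, hbv h]
              · intro _; exact Or.inl hsu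
          · -- a ∈ P \ Q
            have hsaQ : s a ∉ Q := hsPQ a haP haQ
            have hav : a ∉ v := fun h => haQ (hvQ h)
            have hsav : s a ∉ v := fun h => hsaQ (hvQ h)
            simp only [Set.mem_union, hav, hsav, or_false]
            exact huc a haP
        · have haQ : a ∈ Q := by
            have : a ∈ P ∪ Q := hcover ▸ Set.mem_univ a
            exact this.resolve_left haP
          have hsaP : s a ∉ P := hsQP a haQ haP
          have hau : a ∉ u := fun h => haP (huP h)
          have hsau : s a ∉ u := fun h => hsaP (huP h)
          simp only [Set.mem_union, hau, hsau, false_or]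
          exact hvc a haQ
      · -- Coherent on u ∪ v
        have key : ∀ b ∈ u, ∀ c ∈ v, ¬ b ≤ s c ∧ ¬ c ≤ s b := by
          intro b hb c hc
          by_cases hbQ : b ∈ Q
          · -- b ∈ P ∩ Q, so b = s ⊥ ∈ v
            have hbv' : b ∈ v := by
              rcases hPQ b (huP hb) hbQ with rfl | rfl
              · exact absurd hb hbu
              · exact hsv
            exact ⟨hvcoh b hbv' c hc, hvcoh c hc b hbv'⟩
          · by_cases hcP : c ∈ P
            · have hcu' : c ∈ u := by
                rcases hPQ c hcP (hvQ hc) with rfl | rfl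
                · exact absurd hc hbv
                · exact hsu
              exact ⟨hucoh b hb c hcu', hucoh c hcu' b hb⟩
            · -- b ∈ P \ Q, c ∈ Q \ P
              have hscQ : s c ∈ Q := hQs c (hvQ hc)
              have hscP : s c ∉ P := hsQP c (hvQ hc) hcP
              have hsbP : s b ∈ P := hPs b (huP hb)
              have hsbQ : s b ∉ Q := hsPQ b (huP hb) hbQ
              refine ⟨(hnorel b (huP hb) (s c) hscQ hbQ hscP).1, ?_⟩
              exact (hnorel (s b) hsbP c (hvQ hc) hsbQ hcP).2
        rintro b (hb | hb) c (hc | hc)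
        · exact hucoh b hb c hc
        · exact (key b hb c hc).1
        · exact (key c hc b hb).2
        · exact hvcoh b hb c hc
      · -- image is (u, v)
        have hvP : v ∩ P ⊆ u := by
          intro x ⟨hxv, hxP⟩
          rcases hPQ x hxP (hvQ hxv) with rfl | rfl
          · exact absurd hxv hbv
          · exact hsu
        have huQ : u ∩ Q ⊆ v := by
          intro x ⟨hxu, hxQ⟩
          rcases hPQ x (huP hxu) hxQ with rfl | rfl
          · exact absurd hxu hbu
          · exact hsv
        simp only [Prod.mk.injEq]
        constructor
        · rw [Set.union_inter_distrib_right]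
          rw [Set.inter_eq_left.mpr huP, Set.union_eq_left.mpr hvP]
        · rw [Set.union_inter_distrib_right]
          rw [Set.inter_eq_left.mpr hvQ, Set.union_eq_right.mpr huQ]
  · -- medians
    intro u _ v _ w _
    simp only [Prod.mk.injEq]
    constructor <;> (ext x; simp only [Set.mem_inter_iff, Set.mem_union]; tauto)
end
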